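/- Let α_1 = (−6,−3,0), α_2 = (−1,1,0), α_3 = (1,2,2), α_4 = (6,0,−2) in ℝ³ with the standard inner product. Then α_1 + α_2 + α_3 + α_4 = 0; every three of the four vectors are linearly independent, so C = {α_1, α_2, α_3, α_4} is a circuit with dependence coefficients c_1 = c_2 = c_3 = c_4 = 1; and both the acuteness graph Γ_C (which has exactly the edges {1,2}, {2,3}, {3,4}) and the obtuseness graph (which has exactly the edges {1,3}, {1,4}, {2,4}) are connected. In particular, a circuit of vectors in a Euclidean space of dimension ≥ 3 can have connected acuteness graph. -/

import Mathlib

open scoped RealInnerProductSpace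

/-- A circuit: a finite linearly dependent set of vectors, every proper subset of which is
linearly independent. -/
def IsCircuit {V' : Type*} [AddCommGroup V'] [Module ℝ V'] (C : Set V') : Prop :=
  C.Finite ∧ ¬ LinearIndependent ℝ (fun x : C => (x : V')) ∧
    ∀ D : Set V', D ⊂ C → LinearIndependent ℝ (fun x : D => (x : V'))

/-- The four vectors `α₁ = (−6,−3,0)`, `α₂ = (−1,1,0)`, `α₃ = (1,2,2)`, `α₄ = (6,0,−2)`
in `ℝ³`. -/
noncomputable def vv : Fin 4 → EuclideanSpace ℝ (Fin 3) :=
  ![(WithLp.equiv 2 (Fin 3 → ℝ)).symm ![-6, -3, 0],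
    (WithLp.equiv 2 (Fin 3 → ℝ)).symm ![-1, 1, 0],
    (WithLp.equiv 2 (Fin 3 → ℝ)).symm ![1, 2, 2],
    (WithLp.equiv 2 (Fin 3 → ℝ)).symm ![6, 0, -2]]

lemma innertable : ∀ i j, ⟪vv i, vv j⟫ =
    !![45, 3, -12, -36; 3, 2, 1, -6; -12, 1, 9, 2; -36, -6, 2, 40] i j := by
  intro i j
  fin_cases i <;> fin_cases j <;>
    · simp [vv, PiLp.inner_apply, Fin.sum_univ_three, WithLp.equiv_symm_apply, EuclideanSpace.real_norm_sq_eq]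
      try norm_num

lemma vvinj : Function.Injective vv := by
  intro i j h
  fin_cases i <;> fin_cases j <;> simp_all [vv, WithLp.equiv_symm_apply] <;>
    · have := congrFun h 0
      norm_num at this

lemma li123 : LinearIndependent ℝ ![vv 1, vv 2, vv 3] := by
  rw [Fintype.linearIndependent_iff]
  intro g hg
  simp only [Fin.sum_univ_three] at hg
  have e0 := congrArg (fun v => v 0) hg
  have e1 := congrArg (fun v => v 1) hg
  have e2 := congrArg (fun v => v 2) hg
  simp [vv, WithLp.equiv_symm_apply, PiLp.smul_apply, PiLp.add_apply,
    smul_eq_mul] at e0 e1 e2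
  intro i
  fin_cases i <;> · simp; linarith

lemma li023 : LinearIndependent ℝ ![vv 0, vv 2, vv 3] := by
  rw [Fintype.linearIndependent_iff]
  intro g hg
  simp only [Fin.sum_univ_three] at hg
  have e0 := congrArg (fun v => v 0) hg
  have e1 := congrArg (fun v => v 1) hg
  have e2 := congrArg (fun v => v 2) hg
  simp [vv, WithLp.equiv_symm_apply, PiLp.smul_apply, PiLp.add_apply,
    smul_eq_mul] at e0 e1 e2
  intro i
  fin_cases i <;> · simp; linarith

lemma li013 : LinearIndependent ℝ ![vv 0, vv 1, vv 3] := by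
  rw [Fintype.linearIndependent_iff]
  intro g hg
  simp only [Fin.sum_univ_three] at hg
  have e0 := congrArg (fun v => v 0) hg
  have e1 := congrArg (fun v => v 1) hg
  have e2 := congrArg (fun v => v 2) hg
  simp [vv, WithLp.equiv_symm_apply, PiLp.smul_apply, PiLp.add_apply,
    smul_eq_mul] at e0 e1 e2
  intro i
  fin_cases i <;> · simp; linarith

lemma li012 : LinearIndependent ℝ ![vv 0, vv 1, vv 2] := by
  rw [Fintype.linearIndependent_iff]
  intro g hg
  simp only [Fin.sum_univ_three] at hg
  have e0 := congrArg (fun v => v 0) hg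
  have e1 := congrArg (fun v => v 1) hg
  have e2 := congrArg (fun v => v 2) hg
  simp [vv, WithLp.equiv_symm_apply, PiLp.smul_apply, PiLp.add_apply,
    smul_eq_mul] at e0 e1 e2
  intro i
  fin_cases i <;> · simp; linarith

lemma vvsum : vv 0 + vv 1 + vv 2 + vv 3 = 0 := by
  ext k
  fin_cases k <;>
    simp [vv, WithLp.equiv_symm_apply, PiLp.add_apply, PiLp.zero_apply] <;> norm_num

lemma proper_li : ∀ S : Set (EuclideanSpace ℝ (Fin 3)), S ⊂ Set.range vv →
    LinearIndependent ℝ (fun x : S => (x : EuclideanSpace ℝ (Fin 3))) := by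
  intro S hS
  obtain ⟨hsub, hne⟩ := hS
  obtain ⟨x, hxr, hxS⟩ := Set.not_subset.mp hne
  obtain ⟨i, rfl⟩ := hxr
  have key : ∀ (w : Fin 3 → EuclideanSpace ℝ (Fin 3)),
      LinearIndependent ℝ w → S ⊆ Set.range w →
      LinearIndependent ℝ (fun x : S => (x : EuclideanSpace ℝ (Fin 3))) := by
    intro w hw hsw
    exact hw.linearIndepOn_id.mono hsw
  fin_cases i
  · refine key ![vv 1, vv 2, vv 3] li123 ?_
    intro y hy
    obtain ⟨j, rfl⟩ := hsub hy
    fin_cases j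
    · exact absurd hy hxS
    · exact ⟨0, rfl⟩
    · exact ⟨1, rfl⟩
    · exact ⟨2, rfl⟩
  · refine key ![vv 0, vv 2, vv 3] li023 ?_
    intro y hy
    obtain ⟨j, rfl⟩ := hsub hy
    fin_cases j
    · exact ⟨0, rfl⟩
    · exact absurd hy hxS
    · exact ⟨1, rfl⟩
    · exact ⟨2, rfl⟩
  · refine key ![vv 0, vv 1, vv 3] li013 ?_
    intro y hy
    obtain ⟨j, rfl⟩ := hsub hy
    fin_cases j
    · exact ⟨0, rfl⟩
    · exact ⟨1, rfl⟩
    · exact absurd hy hxS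
    · exact ⟨2, rfl⟩
  · refine key ![vv 0, vv 1, vv 2] li012 ?_
    intro y hy
    obtain ⟨j, rfl⟩ := hsub hy
    fin_cases j
    · exact ⟨0, rfl⟩
    · exact ⟨1, rfl⟩
    · exact ⟨2, rfl⟩
    · exact absurd hy hxS

lemma not_li_range : ¬ LinearIndependent ℝ
    (fun x : Set.range vv => (x : EuclideanSpace ℝ (Fin 3))) := by
  intro h
  have hli : LinearIndependent ℝ vv :=
    h.comp (Set.rangeFactorization vv)
      (fun a b hab => vvinj (congrArg Subtype.val hab))
  rw [Fintype.linearIndependent_iff] at hli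
  have := hli (fun _ => 1) (by
    simp only [Fin.sum_univ_four, one_smul]
    exact vvsum) 0
  norm_num at this

/-- The four vectors sum to zero; they form a circuit (with dependence coefficients all `1`);
the acuteness graph has exactly the edges `{1,2}, {2,3}, {3,4}`, the obtuseness graph has
exactly the edges `{1,3}, {1,4}, {2,4}`, and both graphs are connected.  In particular a
circuit in a Euclidean space of dimension `≥ 3` can have connected acuteness graph. -/
theorem stmt18 :
    (vv 0 + vv 1 + vv 2 + vv 3 = 0) ∧
    Function.Injective vv ∧
    (∀ S : Set (EuclideanSpace ℝ (Fin 3)), S ⊂ Set.range vv →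
      LinearIndependent ℝ (fun x : S => (x : EuclideanSpace ℝ (Fin 3)))) ∧
    IsCircuit (Set.range vv) ∧
    (∀ i j : Fin 4, (i ≠ j ∧ 0 < ⟪vv i, vv j⟫) ↔
      (i, j) ∈ ({(0, 1), (1, 0), (1, 2), (2, 1), (2, 3), (3, 2)} : Set (Fin 4 × Fin 4))) ∧
    (∀ i j : Fin 4, (i ≠ j ∧ ⟪vv i, vv j⟫ < 0) ↔
      (i, j) ∈ ({(0, 2), (2, 0), (0, 3), (3, 0), (1, 3), (3, 1)} : Set (Fin 4 × Fin 4))) ∧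
    (SimpleGraph.fromRel fun i j : Fin 4 => 0 < ⟪vv i, vv j⟫).Connected ∧
    (SimpleGraph.fromRel fun i j : Fin 4 => ⟪vv i, vv j⟫ < 0).Connected := by
  refine ⟨vvsum, vvinj, proper_li, ⟨Set.finite_range vv, not_li_range, proper_li⟩, ?_, ?_, ?_, ?_⟩
  · intro i j
    fin_cases i <;> fin_cases j <;>
      · simp only [innertable]
        simp [Prod.ext_iff]
        try norm_num
  · intro i j
    fin_cases i <;> fin_cases j <;>
      · simp only [innertable]
        simp [Prod.ext_iff]
        try norm_num
  · set G := SimpleGraph.fromRel fun i j : Fin 4 => 0 < ⟪vv i, vv j⟫ with hG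
    have h01 : G.Adj 0 1 := by
      rw [hG, SimpleGraph.fromRel_adj]
      exact ⟨by decide, Or.inl (by rw [innertable 0 1]; norm_num)⟩
    have h12 : G.Adj 1 2 := by
      rw [hG, SimpleGraph.fromRel_adj]
      exact ⟨by decide, Or.inl (by rw [innertable 1 2]; simp)⟩
    have h23 : G.Adj 2 3 := by
      rw [hG, SimpleGraph.fromRel_adj]
      exact ⟨by decide, Or.inl (by rw [innertable 2 3]; simp)⟩
    have r0 : ∀ v : Fin 4, G.Reachable 0 v := by
      intro v
      fin_cases v
      · rfl
      · exact h01.reachable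
      · exact h01.reachable.trans h12.reachable
      · exact (h01.reachable.trans h12.reachable).trans h23.reachable
    exact ⟨fun u v => (r0 u).symm.trans (r0 v)⟩
  · set G := SimpleGraph.fromRel fun i j : Fin 4 => ⟪vv i, vv j⟫ < 0 with hG
    have h02 : G.Adj 0 2 := by
      rw [hG, SimpleGraph.fromRel_adj]
      exact ⟨by decide, Or.inl (by rw [innertable 0 2]; simp)⟩
    have h03 : G.Adj 0 3 := by
      rw [hG, SimpleGraph.fromRel_adj]
      exact ⟨by decide, Or.inl (by rw [innertable 0 3]; simp)⟩
    have h31 : G.Adj 3 1 := by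
      rw [hG, SimpleGraph.fromRel_adj]
      exact ⟨by decide, Or.inr (by rw [innertable 1 3]; simp)⟩
    have r0 : ∀ v : Fin 4, G.Reachable 0 v := by
      intro v
      fin_cases v
      · rfl
      · exact h03.reachable.trans h31.reachable
      · exact h02.reachable
      · exact h03.reachable
    exact ⟨fun u v => (r0 u).symm.trans (r0 v)⟩
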